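/- The number of ways to place m non-attacking rooks on the linear chained board B^-_{n,k} equals the sum over all compositions (a_1,...,a_k) with a_1+...+a_k = m satisfying a_{i-1}+a_i ≤ n (with a_0 = 0) of the product over i from 1 to k of C(n - a_{i-1}, a_i) · (n)_{a_i}, where (n)_a denotes the falling factorial n(n-1)···(n-a+1). -/

import Mathlib

/-- Non-attacking rook placement on the linear chained board `B⁻_{n,k}`:
rooks are triples (board, row, column). -/
def LinNonAtt (n k : ℕ) (R : Finset (Fin k × Fin n × Fin n)) : Prop :=
  (∀ r ∈ R, ∀ s ∈ R, r ≠ s → r.1 = s.1 → r.2.1 ≠ s.2.1 ∧ r.2.2 ≠ s.2.2) ∧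
  (∀ r ∈ R, ∀ s ∈ R, (r.1 : ℕ) + 1 = (s.1 : ℕ) → r.2.1 ≠ s.2.2)

/-- Non-attacking rook placement on the circular chained board `B°_{n,k}`. -/
def CircNonAtt (n k : ℕ) (R : Finset (Fin k × Fin n × Fin n)) : Prop :=
  (∀ r ∈ R, ∀ s ∈ R, r ≠ s → r.1 = s.1 → r.2.1 ≠ s.2.1 ∧ r.2.2 ≠ s.2.2) ∧
  (∀ r ∈ R, ∀ s ∈ R, ((r.1 : ℕ) + 1) % k = (s.1 : ℕ) → r.2.1 ≠ s.2.2)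

/-- Number of rooks of `R` on board `i`. -/
def bCount {n k : ℕ} (R : Finset (Fin k × Fin n × Fin n)) (i : Fin k) : ℕ :=
  (R.filter fun r => r.1 = i).card

/-- `a_{i-1}` with the convention `a_0 = 0` (linear case). -/
def prevL {k : ℕ} (a : Fin k → ℕ) (i : Fin k) : ℕ :=
  if i.val = 0 then 0
  else a ⟨i.val - 1, Nat.lt_of_le_of_lt (Nat.sub_le _ _) i.isLt⟩

/-- `a_{i-1}` with cyclic index convention (circular case). -/
def prevC {k : ℕ} (a : Fin k → ℕ) (i : Fin k) : ℕ :=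
  a ⟨(i.val + (k - 1)) % k, Nat.mod_lt _ i.pos⟩



section RookProof
open Finset

def BoardOK {n : ℕ} (S : Finset (Fin n × Fin n)) : Prop :=
  ∀ p ∈ S, ∀ q ∈ S, p ≠ q → p.1 ≠ q.1 ∧ p.2 ≠ q.2


lemma BoardOK.injOn_fst {n : ℕ} {S : Finset (Fin n × Fin n)} (h : BoardOK S) :
    Set.InjOn Prod.fst (S : Set (Fin n × Fin n)) := by
  intro p hp q hq hpq
  by_contra hne
  exact (h p hp q hq hne).1 hpq


lemma fiber_bij {n : ℕ} (F T : Finset (Fin n)) :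
    Function.Bijective
      (fun e : ({ x // x ∈ T } ↪ {c : Fin n // c ∉ F}) =>
        (⟨T.attach.image fun x => (x.1, (e x).1), by
          refine ⟨⟨?_, ?_⟩, ?_⟩
          · -- BoardOK
            intro p hp q hq hne
            simp only [Finset.mem_image, Finset.mem_attach, true_and] at hp hq
            obtain ⟨x, rfl⟩ := hp
            obtain ⟨x', rfl⟩ := hq
            have hrr : x ≠ x' := fun h => hne (by rw [h])
            exact ⟨fun h => hrr (Subtype.ext h), fun h => hrr (e.injective (Subtype.ext h))⟩
          · -- avoid F
            intro q hq
            simp only [Finset.mem_image, Finset.mem_attach, true_and] at hq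
            obtain ⟨x, rfl⟩ := hq
            exact (e x).2
          · -- image fst = T
            ext y
            simp only [Finset.image_image, Finset.mem_image, Finset.mem_attach, true_and]
            constructor
            · rintro ⟨x, hx⟩
              exact hx ▸ x.2
            · intro hy
              exact ⟨(⟨y, hy⟩ : {x // x ∈ T}), rfl⟩⟩ :
        {S : Finset (Fin n × Fin n) //
          (BoardOK S ∧ ∀ q ∈ S, q.2 ∉ F) ∧ S.image Prod.fst = T})) := by
  constructor
  · intro e e' h
    have h' := congrArg (fun s => s.1) h
    dsimp only at h'
    ext r
    have hmem : (r.1, (e r).1) ∈ T.attach.image fun x => (x.1, (e' x).1) := by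
      rw [← h']
      exact Finset.mem_image.mpr ⟨r, Finset.mem_attach _ _, rfl⟩
    obtain ⟨r', _, hr'⟩ := Finset.mem_image.mp hmem
    have h1 : (r' : Fin n) = (r : Fin n) := congrArg Prod.fst hr'
    have h2 : (e' r').1 = (e r).1 := congrArg Prod.snd hr'
    rw [show r' = r from Subtype.ext h1] at h2
    exact congrArg Fin.val h2.symm
  · rintro ⟨S, ⟨hB, hF⟩, hT⟩
    have key : ∀ r : { x // x ∈ T }, ∃ c, ((r : Fin n), c) ∈ S := by
      rintro ⟨r, hr⟩
      rw [← hT] at hr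
      obtain ⟨p, hp, hp1⟩ := Finset.mem_image.mp hr
      exact ⟨p.2, by simpa [← hp1] using hp⟩
    choose f hf using key
    have hinj : Function.Injective fun r => (⟨f r, fun hm => hF _ (hf r) hm⟩ : {c : Fin n // c ∉ F}) := by
      intro r r' hrr
      by_contra hne
      have hv : (r : Fin n) ≠ (r' : Fin n) := fun h => hne (Subtype.ext h)
      have hcc : f r = f r' := congrArg Subtype.val hrr
      have h1 := hf r
      rw [hcc] at h1
      exact (hB _ h1 _ (hf r') (fun h => hv (congrArg Prod.fst h))).2 rfl
    refine ⟨⟨_, hinj⟩, ?_⟩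
    apply Subtype.ext
    dsimp only
    ext ⟨r, c⟩
    simp only [Finset.mem_image, Finset.mem_attach, true_and]
    constructor
    · rintro ⟨r', h⟩
      have h1 : (r' : Fin n) = r := congrArg Prod.fst h
      have h2 : f r' = c := congrArg Prod.snd h
      rw [← h1, ← h2]
      exact hf r'
    · intro hrc
      have hrT : r ∈ T := by
        rw [← hT]; exact Finset.mem_image.mpr ⟨(r, c), hrc, rfl⟩
      refine ⟨⟨r, hrT⟩, ?_⟩
      have hs := hf ⟨r, hrT⟩
      exact hB.injOn_fst.eq_iff hs hrc |>.mp rfl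


lemma natcard_fiberwise {α β : Type*} [Fintype α] [DecidableEq β]
    (p : α → Prop) (f : α → β) (t : Finset β) (h : ∀ x, p x → f x ∈ t) :
    Nat.card {x // p x} = ∑ b ∈ t, Nat.card {x // p x ∧ f x = b} := by
  classical
  simp only [Nat.card_eq_fintype_card, Fintype.card_subtype]
  rw [Finset.card_eq_sum_card_fiberwise (f := f) (t := t)
    (fun x hx => h x (by simpa using hx))]
  refine Finset.sum_congr rfl fun b _ => ?_
  congr 1
  ext x
  simp [Finset.mem_filter]


lemma card_not_mem {n : ℕ} (F : Finset (Fin n)) :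
    Fintype.card {c : Fin n // c ∉ F} = n - F.card := by
  classical
  rw [Fintype.card_subtype]
  have : Finset.univ.filter (fun c => c ∉ F) = Fᶜ := by ext c; simp
  rw [this, Finset.card_compl, Fintype.card_fin]


lemma board_count (n a : ℕ) (F : Finset (Fin n)) :
    Nat.card {S : Finset (Fin n × Fin n) // BoardOK S ∧ (∀ q ∈ S, q.2 ∉ F) ∧ S.card = a}
      = Nat.choose n a * Nat.descFactorial (n - F.card) a := by
  classical
  rw [natcard_fiberwise (fun S => BoardOK S ∧ (∀ q ∈ S, q.2 ∉ F) ∧ S.card = a)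
      (fun S => S.image Prod.fst) (Finset.powersetCard a Finset.univ)
      (fun S hS => by
        rw [Finset.mem_powersetCard]
        exact ⟨Finset.subset_univ _,
          by rw [Finset.card_image_of_injOn hS.1.injOn_fst]; exact hS.2.2⟩)]
  have hfib : ∀ T ∈ Finset.powersetCard a (Finset.univ : Finset (Fin n)),
      Nat.card {S : Finset (Fin n × Fin n) //
          (BoardOK S ∧ (∀ q ∈ S, q.2 ∉ F) ∧ S.card = a) ∧ S.image Prod.fst = T}
        = Nat.descFactorial (n - F.card) a := by
    intro T hT
    have hTa : T.card = a := (Finset.mem_powersetCard.mp hT).2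
    have e1 : {S : Finset (Fin n × Fin n) //
          (BoardOK S ∧ (∀ q ∈ S, q.2 ∉ F) ∧ S.card = a) ∧ S.image Prod.fst = T} ≃
        {S : Finset (Fin n × Fin n) //
          (BoardOK S ∧ ∀ q ∈ S, q.2 ∉ F) ∧ S.image Prod.fst = T} :=
      Equiv.subtypeEquivRight (fun S => by
        constructor
        · rintro ⟨⟨h1, h2, _⟩, h4⟩; exact ⟨⟨h1, h2⟩, h4⟩
        · rintro ⟨⟨h1, h2⟩, h4⟩
          refine ⟨⟨h1, h2, ?_⟩, h4⟩
          rw [← hTa, ← h4, Finset.card_image_of_injOn h1.injOn_fst])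
    rw [Nat.card_congr e1, Nat.card_congr (Equiv.ofBijective _ (fiber_bij F T)).symm,
      Nat.card_eq_fintype_card, Fintype.card_embedding_eq, card_not_mem,
      Fintype.card_coe, hTa]
  rw [Finset.sum_congr rfl hfib, Finset.sum_const, Finset.card_powersetCard,
    Finset.card_univ, Fintype.card_fin, smul_eq_mul]


def prevP {k : ℕ} (p : ℕ) (a : Fin k → ℕ) (i : Fin k) : ℕ :=
  if i.val = 0 then p
  else a ⟨i.val - 1, Nat.lt_of_le_of_lt (Nat.sub_le _ _) i.isLt⟩


lemma prevP_succ {k : ℕ} (p : ℕ) (a : Fin (k + 1) → ℕ) (i : Fin k) :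
    prevP p a i.succ = prevP (a 0) (a ∘ Fin.succ) i := by
  unfold prevP
  rcases Nat.eq_zero_or_pos i.val with h | h
  · rw [if_neg (by simp [Fin.val_succ]), if_pos h]
    congr 1
    apply Fin.ext
    simp [Fin.val_succ, h]
  · have h2 : i.val ≠ 0 := Nat.pos_iff_ne_zero.mp h
    rw [if_neg (by simp [Fin.val_succ]), if_neg h2]
    simp only [Function.comp_apply]
    congr 1
    apply Fin.ext
    simp only [Fin.val_succ]
    omega


def ChainCond {n k : ℕ} (F : Finset (Fin n)) (a : Fin k → ℕ)
    (P : Fin k → Finset (Fin n × Fin n)) : Prop :=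
  (∀ i, BoardOK (P i)) ∧
  (∀ i j : Fin k, (i : ℕ) + 1 = (j : ℕ) → ∀ p ∈ P i, ∀ q ∈ P j, p.1 ≠ q.2) ∧
  (∀ i : Fin k, (i : ℕ) = 0 → ∀ q ∈ P i, q.2 ∉ F) ∧
  (∀ i, (P i).card = a i)


lemma chain_count (n : ℕ) : ∀ (k : ℕ) (a : Fin k → ℕ) (F : Finset (Fin n)),
    Nat.card {P : Fin k → Finset (Fin n × Fin n) // ChainCond F a P} =
      ∏ i, Nat.choose n (a i) * Nat.descFactorial (n - prevP F.card a i) (a i) := by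
  intro k
  induction k with
  | zero =>
    intro a F
    haveI : Unique {P : Fin 0 → Finset (Fin n × Fin n) // ChainCond F a P} :=
      { default := ⟨fun i => i.elim0, fun i => i.elim0, fun i => i.elim0,
          fun i => i.elim0, fun i => i.elim0⟩
        uniq := fun P => Subtype.ext (funext fun i => i.elim0) }
    simp [Nat.card_unique]
  | succ k ih =>
    intro a F
    classical
    rw [natcard_fiberwise (ChainCond F a) (fun P => P 0)
        (Finset.univ.filter fun g => BoardOK g ∧ (∀ q ∈ g, q.2 ∉ F) ∧ g.card = a 0)
        (fun P hP => by
          simp only [Finset.mem_filter, Finset.mem_univ, true_and]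
          exact ⟨hP.1 0, hP.2.2.1 0 rfl, hP.2.2.2 0⟩)]
    have hfib : ∀ g ∈ Finset.univ.filter
        (fun g : Finset (Fin n × Fin n) => BoardOK g ∧ (∀ q ∈ g, q.2 ∉ F) ∧ g.card = a 0),
        Nat.card {P : Fin (k+1) → Finset (Fin n × Fin n) // ChainCond F a P ∧ P 0 = g}
          = ∏ i : Fin k, Nat.choose n ((a ∘ Fin.succ) i) *
              Nat.descFactorial (n - prevP (a 0) (a ∘ Fin.succ) i) ((a ∘ Fin.succ) i) := by
      intro g hg
      simp only [Finset.mem_filter, Finset.mem_univ, true_and] at hg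
      obtain ⟨hgB, hgF, hgc⟩ := hg
      have cond_tail : ∀ P : Fin (k+1) → Finset (Fin n × Fin n), ChainCond F a P → P 0 = g →
          ChainCond (g.image Prod.fst) (a ∘ Fin.succ) (Fin.tail P) := by
        intro P hP hP0
        refine ⟨fun i => hP.1 i.succ, ?_, ?_, fun i => hP.2.2.2 i.succ⟩
        · intro i j hij p hp q hq
          exact hP.2.1 i.succ j.succ (by simp only [Fin.val_succ]; omega) p hp q hq
        · intro i hi q hq hqF
          obtain ⟨p, hpg, hp1⟩ := Finset.mem_image.mp hqF
          exact hP.2.1 0 i.succ (by simp [Fin.val_succ, hi]) p (hP0 ▸ hpg) q hq hp1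
      have cond_cons : ∀ P' : Fin k → Finset (Fin n × Fin n),
          ChainCond (g.image Prod.fst) (a ∘ Fin.succ) P' →
          ChainCond F a (Fin.cons g P') := by
        rintro P' ⟨h1, h2, h3, h4⟩
        refine ⟨?_, ?_, ?_, ?_⟩
        · intro i
          refine Fin.cases ?_ ?_ i
          · simpa using hgB
          · intro j; simpa using h1 j
        · intro i j hij p hp q hq
          refine Fin.cases ?_ ?_ j hij hp hq
          · intro hij; simp at hij
          · intro j' hij' hp' hq'
            refine Fin.cases ?_ ?_ i hij' hp'
            · intro hij'' hp''
              have hj0 : (j' : ℕ) = 0 := by simpa [Fin.val_succ] using hij''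
              simp only [Fin.cons_zero] at hp''
              simp only [Fin.cons_succ] at hq'
              intro hpq
              exact h3 j' hj0 q hq' (Finset.mem_image.mpr ⟨p, hp'', hpq⟩)
            · intro i' hij'' hp''
              simp only [Fin.cons_succ] at hp'' hq'
              exact h2 i' j' (by simp only [Fin.val_succ] at hij'' ⊢; omega) p hp'' q hq'
        · intro i hi q hq
          have : i = 0 := Fin.ext hi
          subst this
          simp only [Fin.cons_zero] at hq
          exact hgF q hq
        · intro i
          refine Fin.cases ?_ ?_ i
          · simpa using hgc
          · intro j; simpa using h4 j
      have e : {P : Fin (k+1) → Finset (Fin n × Fin n) // ChainCond F a P ∧ P 0 = g} ≃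
          {P' : Fin k → Finset (Fin n × Fin n) //
            ChainCond (g.image Prod.fst) (a ∘ Fin.succ) P'} :=
        { toFun := fun P => ⟨Fin.tail P.1, cond_tail P.1 P.2.1 P.2.2⟩
          invFun := fun G => ⟨Fin.cons g G.1, cond_cons G.1 G.2, by simp⟩
          left_inv := fun P => Subtype.ext (by
            obtain ⟨P, hP, hP0⟩ := P
            dsimp only
            rw [← hP0]
            exact Fin.cons_self_tail P)
          right_inv := fun G => Subtype.ext (by
            dsimp only
            exact Fin.tail_cons (α := fun _ : Fin (k+1) => Finset (Fin n × Fin n)) g G.1) }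
      have hcg : (g.image Prod.fst).card = a 0 := by
        rw [Finset.card_image_of_injOn hgB.injOn_fst, hgc]
      rw [Nat.card_congr e, ih (a ∘ Fin.succ) (g.image Prod.fst), hcg]
    rw [Finset.sum_congr rfl hfib, Finset.sum_const]
    have hcard : (Finset.univ.filter
        (fun g : Finset (Fin n × Fin n) => BoardOK g ∧ (∀ q ∈ g, q.2 ∉ F) ∧ g.card = a 0)).card
        = Nat.choose n (a 0) * Nat.descFactorial (n - F.card) (a 0) := by
      rw [← board_count n (a 0) F, Nat.card_eq_fintype_card, Fintype.card_subtype]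
    have h0 : prevP F.card a 0 = F.card := by simp [prevP]
    rw [hcard, smul_eq_mul, Fin.prod_univ_succ, h0]
    exact congrArg _ (Finset.prod_congr rfl fun i _ => by
      simp only [Function.comp_apply]
      rw [prevP_succ])


lemma choose_desc_swap (n p a : ℕ) :
    Nat.choose n a * Nat.descFactorial (n - p) a
      = Nat.choose (n - p) a * Nat.descFactorial n a := by
  rw [Nat.descFactorial_eq_factorial_mul_choose, Nat.descFactorial_eq_factorial_mul_choose]
  ring


lemma mem_split {n k : ℕ} (R : Finset (Fin k × Fin n × Fin n)) (i : Fin k)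
    (p : Fin n × Fin n) :
    p ∈ (R.filter fun r => r.1 = i).image Prod.snd ↔ (i, p) ∈ R := by
  simp only [Finset.mem_image, Finset.mem_filter]
  constructor
  · rintro ⟨⟨j, q⟩, ⟨hm, rfl⟩, rfl⟩
    exact hm
  · intro h
    exact ⟨(i, p), ⟨h, rfl⟩, rfl⟩


lemma bCount_eq {n k : ℕ} (R : Finset (Fin k × Fin n × Fin n)) (i : Fin k) :
    ((R.filter fun r => r.1 = i).image Prod.snd).card = bCount R i := by
  apply Finset.card_image_of_injOn
  intro p hp q hq hpq
  simp only [Finset.coe_filter, Set.mem_setOf_eq] at hp hq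
  exact Prod.ext (hp.2.trans hq.2.symm) hpq


def splitEquiv (n k : ℕ) :
    Finset (Fin k × Fin n × Fin n) ≃ (Fin k → Finset (Fin n × Fin n)) where
  toFun R := fun i => (R.filter fun r => r.1 = i).image Prod.snd
  invFun P := Finset.univ.filter fun r => r.2 ∈ P r.1
  left_inv R := by
    ext ⟨i, p⟩
    simp only [Finset.mem_filter, Finset.mem_univ, true_and]
    exact mem_split R i p
  right_inv P := by
    funext i
    ext p
    rw [mem_split]
    simp


lemma cond_iff {n k : ℕ} (R : Finset (Fin k × Fin n × Fin n)) (a : Fin k → ℕ) :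
    (LinNonAtt n k R ∧ (fun i => bCount R i) = a) ↔
      ChainCond ∅ a (splitEquiv n k R) := by
  show _ ↔ ChainCond ∅ a (fun i => (R.filter fun r => r.1 = i).image Prod.snd)
  constructor
  · rintro ⟨⟨h1, h2⟩, ha⟩
    refine ⟨?_, ?_, by simp, fun i => (bCount_eq R i).trans (congrFun ha i)⟩
    · intro i p hp q hq hpq
      rw [mem_split] at hp hq
      exact h1 (i, p) hp (i, q) hq (fun h => hpq (congrArg Prod.snd h)) rfl
    · intro i j hij p hp q hq
      rw [mem_split] at hp hq
      exact h2 (i, p) hp (j, q) hq hij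
  · rintro ⟨h1, h2, _, h4⟩
    refine ⟨⟨?_, ?_⟩, ?_⟩
    · rintro ⟨i, p⟩ hr ⟨j, q⟩ hs hrs hfst
      cases hfst
      have hpq : p ≠ q := fun h => hrs (by rw [h])
      exact h1 i p ((mem_split R i p).mpr hr) q ((mem_split R i q).mpr hs) hpq
    · rintro ⟨i, p⟩ hr ⟨j, q⟩ hs hij
      exact h2 i j hij p ((mem_split R i p).mpr hr) q ((mem_split R j q).mpr hs)
    · funext i
      rw [← h4 i, bCount_eq]


lemma card_eq_sum_bCount {n k : ℕ} (R : Finset (Fin k × Fin n × Fin n)) :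
    R.card = ∑ i, bCount R i :=
  Finset.card_eq_sum_card_fiberwise (f := fun r : Fin k × Fin n × Fin n => r.1) (t := Finset.univ)
    (fun _ _ => Finset.mem_univ _)


lemma bCount_le {n k : ℕ} {R : Finset (Fin k × Fin n × Fin n)} (h : LinNonAtt n k R)
    (i : Fin k) : bCount R i ≤ n := by
  have hinj : Set.InjOn (fun r : Fin k × Fin n × Fin n => r.2.1)
      ((R.filter fun r => r.1 = i) : Set (Fin k × Fin n × Fin n)) := by
    intro p hp q hq hpq
    simp only [Finset.coe_filter, Set.mem_setOf_eq] at hp hq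
    by_contra hne
    exact (h.1 p hp.1 q hq.1 hne (hp.2.trans hq.2.symm)).1 hpq
  calc bCount R i = ((R.filter fun r => r.1 = i).image fun r => r.2.1).card :=
        (Finset.card_image_of_injOn hinj).symm
    _ ≤ Fintype.card (Fin n) := Finset.card_le_univ _
    _ = n := Fintype.card_fin n


lemma counts_mem {n k m : ℕ} {R : Finset (Fin k × Fin n × Fin n)}
    (h : LinNonAtt n k R) (hm : R.card = m) :
    (fun i => bCount R i) ∈
      (Fintype.piFinset fun _ : Fin k => Finset.range (n + 1)).filter
        (fun a => (∑ i, a i) = m ∧ ∀ i, prevL a i + a i ≤ n) := by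
  rw [Finset.mem_filter, Fintype.mem_piFinset]
  refine ⟨fun i => Finset.mem_range.mpr (Nat.lt_succ_of_le (bCount_le h i)), ?_, ?_⟩
  · rw [← card_eq_sum_bCount, hm]
  · intro i
    by_cases hi : i.val = 0
    · have : prevL (fun i => bCount R i) i = 0 := by simp [prevL, hi]
      rw [this, zero_add]
      exact bCount_le h i
    · set j : Fin k := ⟨i.val - 1, Nat.lt_of_le_of_lt (Nat.sub_le _ _) i.isLt⟩ with hj
      have hpl : prevL (fun i => bCount R i) i = bCount R j := by simp [prevL, hi, hj]
      rw [hpl]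
      set A := (R.filter fun r => r.1 = j).image fun r => r.2.1 with hA
      set B := (R.filter fun r => r.1 = i).image fun r => r.2.2 with hB
      have hAc : A.card = bCount R j := by
        apply Finset.card_image_of_injOn
        intro p hp q hq hpq
        simp only [Finset.coe_filter, Set.mem_setOf_eq] at hp hq
        by_contra hne
        exact (h.1 p hp.1 q hq.1 hne (hp.2.trans hq.2.symm)).1 hpq
      have hBc : B.card = bCount R i := by
        apply Finset.card_image_of_injOn
        intro p hp q hq hpq
        simp only [Finset.coe_filter, Set.mem_setOf_eq] at hp hq
        by_contra hne
        exact (h.1 p hp.1 q hq.1 hne (hp.2.trans hq.2.symm)).2 hpq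
      have hdisj : Disjoint A B := by
        rw [Finset.disjoint_left]
        intro x hxA hxB
        obtain ⟨p, hp, hp1⟩ := Finset.mem_image.mp hxA
        obtain ⟨q, hq, hq1⟩ := Finset.mem_image.mp hxB
        rw [Finset.mem_filter] at hp hq
        have hval : (p.1 : ℕ) + 1 = (q.1 : ℕ) := by
          rw [hp.2, hq.2, hj]
          simp only
          omega
        exact h.2 p hp.1 q hq.1 hval (hp1.trans hq1.symm)
      calc bCount R j + bCount R i = (A ∪ B).card := by
            rw [Finset.card_union_of_disjoint hdisj, hAc, hBc]
        _ ≤ Fintype.card (Fin n) := Finset.card_le_univ _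
        _ = n := Fintype.card_fin n


/-- The number of placements of `m` non-attacking rooks on the linear chained board. -/
theorem linear_rook_count (n k m : ℕ) :
    Nat.card {R : Finset (Fin k × Fin n × Fin n) // LinNonAtt n k R ∧ R.card = m} =
      ∑ a ∈ (Fintype.piFinset fun _ : Fin k => Finset.range (n + 1)).filter
          (fun a => (∑ i, a i) = m ∧ ∀ i, prevL a i + a i ≤ n),
        ∏ i, Nat.choose (n - prevL a i) (a i) * Nat.descFactorial n (a i) := by
  classical
  rw [natcard_fiberwise (fun R => LinNonAtt n k R ∧ R.card = m) (fun R i => bCount R i)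
      ((Fintype.piFinset fun _ : Fin k => Finset.range (n + 1)).filter
        (fun a => (∑ i, a i) = m ∧ ∀ i, prevL a i + a i ≤ n))
      (fun R hR => counts_mem hR.1 hR.2)]
  refine Finset.sum_congr rfl fun a ha => ?_
  rw [Finset.mem_filter] at ha
  obtain ⟨-, hsum, -⟩ := ha
  have e1 : {R : Finset (Fin k × Fin n × Fin n) //
        (LinNonAtt n k R ∧ R.card = m) ∧ (fun i => bCount R i) = a} ≃
      {R : Finset (Fin k × Fin n × Fin n) //
        LinNonAtt n k R ∧ (fun i => bCount R i) = a} :=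
    Equiv.subtypeEquivRight (fun R => by
      constructor
      · rintro ⟨⟨h1, -⟩, h3⟩; exact ⟨h1, h3⟩
      · rintro ⟨h1, h3⟩
        refine ⟨⟨h1, ?_⟩, h3⟩
        rw [card_eq_sum_bCount, ← hsum]
        exact Finset.sum_congr rfl fun i _ => congrFun h3 i)
  have e2 := (splitEquiv n k).subtypeEquiv (fun R => cond_iff R a)
  rw [Nat.card_congr (e1.trans e2), chain_count n k a ∅]
  refine Finset.prod_congr rfl fun i _ => ?_
  have hp : prevP (Finset.card (∅ : Finset (Fin n))) a i = prevL a i := by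
    simp [prevP, prevL]
  rw [hp, choose_desc_swap]

end RookProof
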